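/- Let ρ_AB be a density matrix on ℂ^m⊗ℂ^n and ρ_CD a density matrix on ℂ^u⊗ℂ^v. Suppose there exists a rank-one von Neumann measurement {Π_h} on ℂ^n⊗ℂ^u fixing ρ_B⊗ρ_C such that Π^{BC}(√(ρ_AB⊗ρ_CD)) = √(ρ_AB⊗ρ_CD). Then both ρ_AB and ρ_CD are separable, where a density matrix τ on ℂ^p⊗ℂ^q is called separable if τ = Σ_k t_k (σ_k ⊗ ω_k) for some finitely many t_k ≥ 0 and density matrices σ_k on ℂ^p, ω_k on ℂ^q. -/

import Mathlib

open scoped Matrix Kronecker BigOperators ComplexOrder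
open Matrix

/-- The positive-semidefinite square root of a PSD matrix (0 if not PSD). -/
noncomputable def psdSqrt {N : Type*} [Fintype N] [DecidableEq N] (A : Matrix N N ℂ) :
    Matrix N N ℂ :=
  open scoped Classical in
  if h : A.PosSemidef then
    (h.1.eigenvectorUnitary : Matrix N N ℂ) *
      diagonal ((↑) ∘ (√·) ∘ h.1.eigenvalues) * (star h.1.eigenvectorUnitary : Matrix N N ℂ)
  else 0

/-- Squared Frobenius (Hilbert–Schmidt) norm: `‖X‖² = tr (Xᴴ X)`. -/
noncomputable def hsNormSq {N : Type*} [Fintype N] (X : Matrix N N ℂ) : ℝ :=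
  (Matrix.trace (Xᴴ * X)).re

/-- A density matrix: positive semidefinite with unit trace. -/
def IsDensity {N : Type*} [Fintype N] [DecidableEq N] (ρ : Matrix N N ℂ) : Prop :=
  ρ.PosSemidef ∧ ρ.trace = 1

/-- Standard inner product on `ℂ^N`. -/
noncomputable def cInner {N : Type*} [Fintype N] (x y : N → ℂ) : ℂ :=
  ∑ i, star (x i) * y i

/-- Outer product `ψ ψ†`. -/
noncomputable def outer {N : Type*} (ψ : N → ℂ) : Matrix N N ℂ :=
  Matrix.vecMulVec ψ (star ψ)

/-- The family of unit vectors of a rank-one von Neumann measurement: an orthonormal basis,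
indexed by the dimension. -/
def IsVNM {N : Type*} [Fintype N] [DecidableEq N] (u : N → N → ℂ) : Prop :=
  ∀ a b, cInner (u a) (u b) = if a = b then (1 : ℂ) else 0

/-- The rank-one projection `Π_h = u_h u_h†` of a measurement. -/
noncomputable def projOf {N : Type*} (u : N → N → ℂ) (h : N) : Matrix N N ℂ :=
  outer (u h)

/-- The measurement `{u_h u_h†}` fixes `σ`: `Σ_h Π_h σ Π_h = σ`. -/
def FixesVNM {N : Type*} [Fintype N] (u : N → N → ℂ) (σ : Matrix N N ℂ) : Prop :=
  ∑ h, projOf u h * σ * projOf u h = σ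

/-- Reduced state of the second factor: `(ρ_B)_{j j'} = Σ_i ρ_{(i,j),(i,j')}`. -/
noncomputable def redB {m n : ℕ} (ρ : Matrix (Fin m × Fin n) (Fin m × Fin n) ℂ) :
    Matrix (Fin n) (Fin n) ℂ :=
  Matrix.of fun j j' => ∑ i, ρ (i, j) (i, j')

/-- Reduced state of the first factor: `(ρ_C)_{k k'} = Σ_l ρ_{(k,l),(k',l)}`. -/
noncomputable def redC {u v : ℕ} (ρ : Matrix (Fin u × Fin v) (Fin u × Fin v) ℂ) :
    Matrix (Fin u) (Fin u) ℂ :=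
  Matrix.of fun k k' => ∑ l, ρ (k, l) (k', l)

/-- `I_m ⊗ P ⊗ I_v` acting on the middle two factors. -/
noncomputable def ampMid (m v : ℕ) {n u : ℕ} (P : Matrix (Fin n × Fin u) (Fin n × Fin u) ℂ) :
    Matrix ((Fin m × Fin n) × Fin u × Fin v) ((Fin m × Fin n) × Fin u × Fin v) ℂ :=
  Matrix.of fun p q =>
    (if p.1.1 = q.1.1 then (1 : ℂ) else 0) * P (p.1.2, p.2.1) (q.1.2, q.2.1) *
      (if p.2.2 = q.2.2 then (1 : ℂ) else 0)

/-- The map `Π^{BC}(X) = Σ_h (I_m ⊗ Π_h ⊗ I_v) X (I_m ⊗ Π_h ⊗ I_v)`. -/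
noncomputable def pinchBC {m n u v : ℕ} (w : (Fin n × Fin u) → (Fin n × Fin u) → ℂ)
    (X : Matrix ((Fin m × Fin n) × Fin u × Fin v) ((Fin m × Fin n) × Fin u × Fin v) ℂ) :
    Matrix ((Fin m × Fin n) × Fin u × Fin v) ((Fin m × Fin n) × Fin u × Fin v) ℂ :=
  ∑ h, ampMid m v (projOf w h) * X * ampMid m v (projOf w h)

/-- The measurement-induced nonbilocality `N_H^b(ρ_AB ⊗ ρ_CD)`. -/
noncomputable def NHb {m n u v : ℕ}
    (ρAB : Matrix (Fin m × Fin n) (Fin m × Fin n) ℂ)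
    (ρCD : Matrix (Fin u × Fin v) (Fin u × Fin v) ℂ) : ℝ :=
  sSup { r : ℝ | ∃ w : (Fin n × Fin u) → (Fin n × Fin u) → ℂ,
    IsVNM w ∧ FixesVNM w (redB ρAB ⊗ₖ redC ρCD) ∧
    r = hsNormSq (psdSqrt (ρAB ⊗ₖ ρCD) - pinchBC w (psdSqrt (ρAB ⊗ₖ ρCD))) }

/-- A separable density matrix on `ℂ^p ⊗ ℂ^q`. -/
def Separable {p q : ℕ} (τ : Matrix (Fin p × Fin q) (Fin p × Fin q) ℂ) : Prop :=
  ∃ (k : ℕ) (t : Fin k → ℝ) (σ : Fin k → Matrix (Fin p) (Fin p) ℂ)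
    (ω : Fin k → Matrix (Fin q) (Fin q) ℂ),
    (∀ i, 0 ≤ t i) ∧ (∀ i, IsDensity (σ i)) ∧ (∀ i, IsDensity (ω i)) ∧
      τ = ∑ i, ((t i : ℝ) : ℂ) • (σ i ⊗ₖ ω i)

/-! ### Auxiliary lemmas -/

section PartialTrace

variable {α β : Type*} [Fintype α] [Fintype β] [DecidableEq α] [DecidableEq β]

/-- Partial trace over the second factor. -/
noncomputable def ptrR (M : Matrix (α × β) (α × β) ℂ) : Matrix α α ℂ :=
  Matrix.of fun i i' => ∑ l, M (i, l) (i', l)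

/-- Partial trace over the first factor. -/
noncomputable def ptrL (M : Matrix (α × β) (α × β) ℂ) : Matrix β β ℂ :=
  Matrix.of fun j j' => ∑ i, M (i, j) (i, j')

omit [DecidableEq α] [DecidableEq β] in
lemma ptrR_posSemidef {M : Matrix (α × β) (α × β) ℂ} (hM : M.PosSemidef) :
    (ptrR M).PosSemidef := by
  classical
  refine Matrix.PosSemidef.of_dotProduct_mulVec_nonneg ?_ ?_
  · ext i i'
    simp only [conjTranspose_apply, ptrR, of_apply, star_sum]
    refine Finset.sum_congr rfl fun l _ => ?_
    have := congrFun (congrFun hM.1 (i, l)) (i', l)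
    simpa [conjTranspose_apply] using this
  · intro x
    have key : ∀ l : β, dotProduct (star (fun p : α × β => if p.2 = l then x p.1 else 0))
        (M *ᵥ (fun p : α × β => if p.2 = l then x p.1 else 0))
        = ∑ i, ∑ i', star (x i) * (M (i, l) (i', l) * x i') := by
      intro l
      simp only [dotProduct, mulVec, Pi.star_apply, Fintype.sum_prod_type, dotProduct]
      simp [apply_ite (starRingEnd ℂ), ite_mul, mul_ite, mul_zero, zero_mul, Finset.mul_sum]
    have lhs : dotProduct (star x) (ptrR M *ᵥ x)
        = ∑ l, ∑ i, ∑ i', star (x i) * (M (i, l) (i', l) * x i') := by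
      simp only [dotProduct, mulVec, ptrR, of_apply, Pi.star_apply, dotProduct,
        Finset.sum_mul, Finset.mul_sum]
      calc ∑ i, ∑ i', ∑ l, star (x i) * (M (i, l) (i', l) * x i')
          = ∑ i, ∑ l, ∑ i', star (x i) * (M (i, l) (i', l) * x i') :=
            Finset.sum_congr rfl fun i _ => Finset.sum_comm
        _ = ∑ l, ∑ i, ∑ i', star (x i) * (M (i, l) (i', l) * x i') := Finset.sum_comm
    rw [lhs]
    refine Finset.sum_nonneg fun l _ => ?_
    rw [← key l]
    exact hM.dotProduct_mulVec_nonneg _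

omit [DecidableEq α] [DecidableEq β] in
lemma ptrL_eq_ptrR (M : Matrix (α × β) (α × β) ℂ) :
    ptrL M = ptrR (M.submatrix Prod.swap Prod.swap) := by
  ext j j'
  simp [ptrL, ptrR]

omit [DecidableEq α] [DecidableEq β] in
lemma ptrL_posSemidef {M : Matrix (α × β) (α × β) ℂ} (hM : M.PosSemidef) :
    (ptrL M).PosSemidef := by
  rw [ptrL_eq_ptrR]
  exact ptrR_posSemidef (hM.submatrix _)

omit [DecidableEq α] [DecidableEq β] in
lemma ptrR_sum {ι : Type*} (s : Finset ι) (f : ι → Matrix (α × β) (α × β) ℂ) :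
    ptrR (∑ h ∈ s, f h) = ∑ h ∈ s, ptrR (f h) := by
  ext i i'
  simp only [ptrR, of_apply, Matrix.sum_apply]
  exact Finset.sum_comm

omit [DecidableEq α] [DecidableEq β] in
lemma ptrL_sum {ι : Type*} (s : Finset ι) (f : ι → Matrix (α × β) (α × β) ℂ) :
    ptrL (∑ h ∈ s, f h) = ∑ h ∈ s, ptrL (f h) := by
  ext i i'
  simp only [ptrL, of_apply, Matrix.sum_apply]
  exact Finset.sum_comm

end PartialTrace

section PSD

variable {N : Type*} [Fintype N] [DecidableEq N]

lemma psdSqrt_mul_self {A : Matrix N N ℂ} (h : A.PosSemidef) : psdSqrt A * psdSqrt A = A := by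
  classical
  rw [psdSqrt, dif_pos h]
  conv_rhs => rw [h.1.spectral_theorem, Unitary.conjStarAlgAut_apply]
  have hU : (star h.1.eigenvectorUnitary : Matrix N N ℂ) * (h.1.eigenvectorUnitary : Matrix N N ℂ)
      = 1 := by simp
  calc _ = (h.1.eigenvectorUnitary : Matrix N N ℂ) * (diagonal ((↑) ∘ (√·) ∘ h.1.eigenvalues) *
        ((star h.1.eigenvectorUnitary : Matrix N N ℂ) * (h.1.eigenvectorUnitary : Matrix N N ℂ)) *
        diagonal ((↑) ∘ (√·) ∘ h.1.eigenvalues)) * (star h.1.eigenvectorUnitary : Matrix N N ℂ) := by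
        simp only [Matrix.mul_assoc]
    _ = _ := by
      rw [hU, Matrix.mul_one, diagonal_mul_diagonal]
      congr 3
      ext i
      simp [← Complex.ofReal_mul, Real.mul_self_sqrt (h.eigenvalues_nonneg i)]

lemma posSemidef_kronecker {p q : Type*} [Fintype p] [Fintype q] [DecidableEq p] [DecidableEq q]
    {A : Matrix p p ℂ} {B : Matrix q q ℂ} (hA : A.PosSemidef) (hB : B.PosSemidef) :
    (A ⊗ₖ B).PosSemidef := by
  exact hA.kronecker hB

lemma psd_trace_nonneg {M : Matrix N N ℂ} (hM : M.PosSemidef) : (0 : ℂ) ≤ M.trace := by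
  rw [Matrix.trace]
  refine Finset.sum_nonneg fun i _ => ?_
  have h := hM.dotProduct_mulVec_nonneg (Pi.single i 1)
  have heq : dotProduct (star (Pi.single i 1)) (M *ᵥ Pi.single i (1:ℂ)) = M i i := by
    simp [dotProduct, mulVec, Pi.single_apply, apply_ite (star : ℂ → ℂ),
      Finset.sum_ite_eq, Finset.sum_ite_eq', mul_comm]
  rwa [heq] at h

lemma psd_eq_zero_of_trace_eq_zero {M : Matrix N N ℂ} (hM : M.PosSemidef)
    (h : M.trace = 0) : M = 0 := by
  exact hM.trace_eq_zero_iff.mp h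

lemma psd_smul_real {M : Matrix N N ℂ} (hM : M.PosSemidef) {c : ℝ} (hc : 0 ≤ c) :
    ((c : ℂ) • M).PosSemidef := by
  refine Matrix.PosSemidef.of_dotProduct_mulVec_nonneg ?_ ?_
  · ext i j
    simp only [conjTranspose_apply, Matrix.smul_apply, smul_eq_mul, star_mul',
      Complex.star_def, Complex.conj_ofReal]
    rw [show (starRingEnd ℂ) (M j i) = M i j from hM.1.apply i j]
  · intro x
    rw [smul_mulVec, dotProduct_smul]
    exact mul_nonneg (Complex.zero_le_real.mpr hc) (hM.dotProduct_mulVec_nonneg x)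

end PSD

section AmpMid

variable {m n u v : ℕ}

lemma ampMid_mul (P Q : Matrix (Fin n × Fin u) (Fin n × Fin u) ℂ) :
    ampMid m v P * ampMid m v Q = ampMid m v (P * Q) := by
  ext ⟨⟨i, j⟩, k, l⟩ ⟨⟨i', j'⟩, k', l'⟩
  simp only [ampMid, Matrix.mul_apply, of_apply, Fintype.sum_prod_type]
  simp only [ite_mul, one_mul, zero_mul, mul_ite, mul_one, mul_zero]
  simp only [Finset.sum_ite_eq, Finset.sum_ite_eq', Finset.mem_univ, if_true,
    Finset.sum_ite_irrel, Finset.sum_const_zero]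

lemma ampMid_zero : ampMid m v (0 : Matrix (Fin n × Fin u) (Fin n × Fin u) ℂ) = 0 := by
  ext p q
  simp [ampMid]

lemma ampMid_one : ampMid m v (1 : Matrix (Fin n × Fin u) (Fin n × Fin u) ℂ) = 1 := by
  ext ⟨⟨i, j⟩, k, l⟩ ⟨⟨i', j'⟩, k', l'⟩
  simp only [ampMid, of_apply, Matrix.one_apply, Prod.mk.injEq, Prod.ext_iff]
  split_ifs <;> simp_all <;> tauto

lemma ampMid_sum {ι : Type*} [Fintype ι] (f : ι → Matrix (Fin n × Fin u) (Fin n × Fin u) ℂ) :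
    ∑ h, ampMid m v (f h) = ampMid m v (∑ h, f h) := by
  ext p q
  simp [ampMid, Matrix.sum_apply, Finset.sum_mul, Finset.mul_sum]

end AmpMid

section VNM

variable {N : Type*} [Fintype N] [DecidableEq N]

lemma projOf_mul {w : N → N → ℂ} (hw : IsVNM w) (a b : N) :
    projOf w a * projOf w b = if a = b then projOf w a else 0 := by
  have h := hw a b
  ext i j
  have expand : (projOf w a * projOf w b) i j
      = (w a i * star (w b j)) * cInner (w a) (w b) := by
    simp only [projOf, outer, Matrix.mul_apply, vecMulVec_apply, Pi.star_apply, cInner,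
      Finset.mul_sum]
    refine Finset.sum_congr rfl fun c _ => by ring
  rw [expand, h]
  split_ifs with hab
  · subst hab
    simp [projOf, outer, vecMulVec_apply]
  · simp

lemma sum_projOf {w : N → N → ℂ} (hw : IsVNM w) : ∑ h, projOf w h = 1 := by
  classical
  let U : Matrix N N ℂ := Matrix.of fun i h => w h i
  have hUU : Uᴴ * U = 1 := by
    ext a b
    simp only [Matrix.mul_apply, conjTranspose_apply, of_apply, U, Matrix.one_apply]
    simpa [cInner] using hw a b
  have hUU' : U * Uᴴ = 1 := mul_eq_one_comm.mp hUU
  ext i j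
  have := congrFun (congrFun hUU' i) j
  simp only [Matrix.mul_apply, conjTranspose_apply, of_apply, U] at this
  simpa [Matrix.sum_apply, projOf, outer, vecMulVec_apply] using this

end VNM
section MidVec

variable {m n u v : ℕ}

/-- `I_m ⊗ ψ ⊗ I_v` as a rectangular matrix from `ℂ^m ⊗ ℂ^v` to the big space. -/
noncomputable def midVec (m v : ℕ) {n u : ℕ} (ψ : Fin n × Fin u → ℂ) :
    Matrix ((Fin m × Fin n) × Fin u × Fin v) (Fin m × Fin v) ℂ :=
  Matrix.of fun p q => if p.1.1 = q.1 ∧ p.2.2 = q.2 then ψ (p.1.2, p.2.1) else 0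

lemma midVec_mul_conjTranspose (ψ : Fin n × Fin u → ℂ) :
    midVec m v ψ * (midVec m v ψ)ᴴ = ampMid m v (outer ψ) := by
  ext ⟨⟨i, j⟩, k, l⟩ ⟨⟨i', j'⟩, k', l'⟩
  simp only [midVec, ampMid, Matrix.mul_apply, conjTranspose_apply, of_apply,
    Fintype.sum_prod_type, outer, vecMulVec_apply, Pi.star_apply]
  simp only [ite_and, apply_ite (star : ℂ → ℂ), star_zero, ite_mul, mul_ite,
    zero_mul, mul_zero, Finset.sum_ite_eq, Finset.sum_ite_eq', Finset.mem_univ, if_true,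
    Finset.sum_ite_irrel, Finset.sum_const_zero]
  split_ifs <;> ring

lemma midVec_sandwich (ψ : Fin n × Fin u → ℂ) (τ : Matrix (Fin m × Fin v) (Fin m × Fin v) ℂ)
    (p q : (Fin m × Fin n) × Fin u × Fin v) :
    (midVec m v ψ * τ * (midVec m v ψ)ᴴ) p q
      = ψ (p.1.2, p.2.1) * star (ψ (q.1.2, q.2.1)) * τ (p.1.1, p.2.2) (q.1.1, q.2.2) := by
  obtain ⟨⟨i, j⟩, k, l⟩ := p
  obtain ⟨⟨i', j'⟩, k', l'⟩ := q
  simp only [midVec, Matrix.mul_apply, conjTranspose_apply, of_apply, Fintype.sum_prod_type]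
  simp only [ite_and, apply_ite (star : ℂ → ℂ), star_zero, ite_mul, mul_ite,
    zero_mul, mul_zero, Finset.sum_ite_eq, Finset.sum_ite_eq', Finset.mem_univ, if_true,
    Finset.sum_ite_irrel, Finset.sum_const_zero, Finset.sum_mul, Finset.mul_sum]
  ring

lemma ptrR_sandwich (ψ : Fin n × Fin u → ℂ) (τ : Matrix (Fin m × Fin v) (Fin m × Fin v) ℂ) :
    ptrR (midVec m v ψ * τ * (midVec m v ψ)ᴴ) = ptrR τ ⊗ₖ ptrR (outer ψ) := by
  ext ⟨i, j⟩ ⟨i', j'⟩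
  simp only [ptrR, of_apply, kroneckerMap_apply]
  rw [Finset.sum_congr rfl fun z _ => midVec_sandwich ψ τ ((i, j), z) ((i', j'), z)]
  simp only [outer, vecMulVec_apply, Pi.star_apply]
  calc ∑ z : Fin u × Fin v, ψ (j, z.1) * star (ψ (j', z.1)) * τ (i, z.2) (i', z.2)
      = ∑ k, ∑ l, ψ (j, k) * star (ψ (j', k)) * τ (i, l) (i', l) := by
        rw [Fintype.sum_prod_type]
    _ = ∑ k, (ψ (j, k) * star (ψ (j', k))) * ∑ l, τ (i, l) (i', l) := by
        simp [Finset.mul_sum, mul_assoc]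
    _ = (∑ l, τ (i, l) (i', l)) * ∑ k, ψ (j, k) * star (ψ (j', k)) := by
        rw [← Finset.sum_mul, mul_comm]

lemma ptrL_sandwich (ψ : Fin n × Fin u → ℂ) (τ : Matrix (Fin m × Fin v) (Fin m × Fin v) ℂ) :
    ptrL (midVec m v ψ * τ * (midVec m v ψ)ᴴ) = ptrL (outer ψ) ⊗ₖ ptrL τ := by
  ext ⟨k, l⟩ ⟨k', l'⟩
  simp only [ptrL, of_apply, kroneckerMap_apply]
  rw [Finset.sum_congr rfl fun z _ => midVec_sandwich ψ τ (z, (k, l)) (z, (k', l'))]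
  simp only [outer, vecMulVec_apply, Pi.star_apply]
  calc ∑ z : Fin m × Fin n, ψ (z.2, k) * star (ψ (z.2, k')) * τ (z.1, l) (z.1, l')
      = ∑ i, ∑ j, ψ (j, k) * star (ψ (j, k')) * τ (i, l) (i, l') := by
        rw [Fintype.sum_prod_type]
    _ = ∑ j, ∑ i, ψ (j, k) * star (ψ (j, k')) * τ (i, l) (i, l') := Finset.sum_comm
    _ = ∑ j, (ψ (j, k) * star (ψ (j, k'))) * ∑ i, τ (i, l) (i, l') := by
        simp [Finset.mul_sum, mul_assoc]
    _ = (∑ j, ψ (j, k) * star (ψ (j, k'))) * ∑ i, τ (i, l) (i, l') := by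
        rw [← Finset.sum_mul]

end MidVec

section Outer

variable {N : Type*} [Fintype N] [DecidableEq N]

lemma outer_posSemidef (ψ : N → ℂ) : (outer ψ).PosSemidef := by
  refine Matrix.PosSemidef.of_dotProduct_mulVec_nonneg ?_ ?_
  · ext i j
    simp only [conjTranspose_apply, outer, vecMulVec_apply, Pi.star_apply, star_mul', star_star]
    ring
  · intro x
    have : dotProduct (star x) (outer ψ *ᵥ x)
        = star (∑ j, star (ψ j) * x j) * (∑ j, star (ψ j) * x j) := by
      simp only [dotProduct, mulVec, outer, vecMulVec_apply, Pi.star_apply, dotProduct,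
        star_sum, star_mul', star_star, Finset.sum_mul, Finset.mul_sum]
      rw [Finset.sum_comm]
      refine Finset.sum_congr rfl fun i _ => Finset.sum_congr rfl fun j _ => by ring
    rw [this]
    exact star_mul_self_nonneg _

lemma trace_ptrR_outer {n u : Type*} [Fintype n] [Fintype u] (ψ : n × u → ℂ) :
    (ptrR (outer ψ)).trace = cInner ψ ψ := by
  simp only [Matrix.trace, Matrix.diag, ptrR, of_apply, outer, vecMulVec_apply, Pi.star_apply,
    cInner, Fintype.sum_prod_type]
  exact Finset.sum_congr rfl fun j _ => Finset.sum_congr rfl fun k _ => mul_comm _ _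

lemma trace_ptrL_outer {n u : Type*} [Fintype n] [Fintype u] (ψ : n × u → ℂ) :
    (ptrL (outer ψ)).trace = cInner ψ ψ := by
  simp only [Matrix.trace, Matrix.diag, ptrL, of_apply, outer, vecMulVec_apply, Pi.star_apply,
    cInner, Fintype.sum_prod_type]
  rw [Finset.sum_comm]
  exact Finset.sum_congr rfl fun j _ => Finset.sum_congr rfl fun k _ => mul_comm _ _

end Outer
section Normalize

lemma trace_re_of_psd {N : Type*} [Fintype N] [DecidableEq N] {M : Matrix N N ℂ}
    (hM : M.PosSemidef) : ((M.trace.re : ℝ) : ℂ) = M.trace ∧ 0 ≤ M.trace.re := by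
  have h := psd_trace_nonneg hM
  rw [Complex.le_def] at h
  refine ⟨?_, by simpa using h.1⟩
  apply Complex.ext
  · simp
  · simpa using h.2

lemma pos_dims {p q : ℕ} {τ : Matrix (Fin p × Fin q) (Fin p × Fin q) ℂ} (h : τ.trace = 1) :
    0 < p ∧ 0 < q := by
  have hne : Nonempty (Fin p × Fin q) := by
    by_contra he
    rw [not_nonempty_iff] at he
    rw [Matrix.trace, Finset.univ_eq_empty, Finset.sum_empty] at h
    exact one_ne_zero h.symm
  obtain ⟨⟨a, b⟩⟩ := hne
  exact ⟨a.pos, b.pos⟩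

lemma unif_density {p : ℕ} (hp : 0 < p) : IsDensity (((p : ℂ))⁻¹ • (1 : Matrix (Fin p) (Fin p) ℂ)) := by
  have hcast : ((p : ℂ))⁻¹ = (((p : ℝ)⁻¹ : ℝ) : ℂ) := by push_cast; ring
  constructor
  · rw [hcast]
    exact psd_smul_real Matrix.PosSemidef.one (by positivity)
  · rw [Matrix.trace_smul, Matrix.trace_one, smul_eq_mul]
    simp only [Fintype.card_fin]
    exact inv_mul_cancel₀ (Nat.cast_ne_zero.mpr hp.ne')

lemma separable_of_rep_left {p q : ℕ} {τ : Matrix (Fin p × Fin q) (Fin p × Fin q) ℂ}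
    {ι : Type*} [Fintype ι] (hp : 0 < p)
    (σ' : ι → Matrix (Fin p) (Fin p) ℂ) (ω : ι → Matrix (Fin q) (Fin q) ℂ)
    (hσ : ∀ h, (σ' h).PosSemidef) (hω : ∀ h, IsDensity (ω h))
    (hτ : τ = ∑ h, σ' h ⊗ₖ ω h) : Separable τ := by
  classical
  set t : ι → ℝ := fun h => (σ' h).trace.re with ht
  have htr : ∀ h, ((t h : ℝ) : ℂ) = (σ' h).trace := fun h => (trace_re_of_psd (hσ h)).1
  have htn : ∀ h, 0 ≤ t h := fun h => (trace_re_of_psd (hσ h)).2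
  set σ : ι → Matrix (Fin p) (Fin p) ℂ :=
    fun h => if t h = 0 then ((p : ℂ))⁻¹ • 1 else (((t h)⁻¹ : ℝ) : ℂ) • σ' h with hσdef
  have hσdens : ∀ h, IsDensity (σ h) := by
    intro h
    rw [hσdef]
    by_cases h0 : t h = 0
    · simpa [h0] using unif_density hp
    · simp only [h0, if_false]
      constructor
      · exact psd_smul_real (hσ h) (inv_nonneg.mpr (htn h))
      · rw [Matrix.trace_smul, ← htr h, smul_eq_mul, ← Complex.ofReal_mul,
          inv_mul_cancel₀ h0, Complex.ofReal_one]
  have hterm : ∀ h, ((t h : ℝ) : ℂ) • (σ h ⊗ₖ ω h) = σ' h ⊗ₖ ω h := by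
    intro h
    by_cases h0 : t h = 0
    · have hz : σ' h = 0 := psd_eq_zero_of_trace_eq_zero (hσ h) (by rw [← htr h, h0]; simp)
      rw [h0, hz, Complex.ofReal_zero, zero_smul, Matrix.zero_kronecker]
    · rw [hσdef]
      simp only [h0, if_false]
      rw [Matrix.smul_kronecker, smul_smul, ← Complex.ofReal_mul, mul_inv_cancel₀ h0,
        Complex.ofReal_one, one_smul]
  refine ⟨Fintype.card ι, fun i => t ((Fintype.equivFin ι).symm i),
    fun i => σ ((Fintype.equivFin ι).symm i), fun i => ω ((Fintype.equivFin ι).symm i),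
    fun i => htn _, fun i => hσdens _, fun i => hω _, ?_⟩
  rw [hτ, ← Equiv.sum_comp (Fintype.equivFin ι).symm (fun h => σ' h ⊗ₖ ω h)]
  exact Finset.sum_congr rfl fun i _ => (hterm _).symm

lemma separable_of_rep_right {p q : ℕ} {τ : Matrix (Fin p × Fin q) (Fin p × Fin q) ℂ}
    {ι : Type*} [Fintype ι] (hq : 0 < q)
    (σ : ι → Matrix (Fin p) (Fin p) ℂ) (ω' : ι → Matrix (Fin q) (Fin q) ℂ)
    (hσ : ∀ h, IsDensity (σ h)) (hω : ∀ h, (ω' h).PosSemidef)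
    (hτ : τ = ∑ h, σ h ⊗ₖ ω' h) : Separable τ := by
  classical
  set t : ι → ℝ := fun h => (ω' h).trace.re with ht
  have htr : ∀ h, ((t h : ℝ) : ℂ) = (ω' h).trace := fun h => (trace_re_of_psd (hω h)).1
  have htn : ∀ h, 0 ≤ t h := fun h => (trace_re_of_psd (hω h)).2
  set ω : ι → Matrix (Fin q) (Fin q) ℂ :=
    fun h => if t h = 0 then ((q : ℂ))⁻¹ • 1 else (((t h)⁻¹ : ℝ) : ℂ) • ω' h with hωdef
  have hωdens : ∀ h, IsDensity (ω h) := by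
    intro h
    rw [hωdef]
    by_cases h0 : t h = 0
    · simpa [h0] using unif_density hq
    · simp only [h0, if_false]
      constructor
      · exact psd_smul_real (hω h) (inv_nonneg.mpr (htn h))
      · rw [Matrix.trace_smul, ← htr h, smul_eq_mul, ← Complex.ofReal_mul,
          inv_mul_cancel₀ h0, Complex.ofReal_one]
  have hterm : ∀ h, ((t h : ℝ) : ℂ) • (σ h ⊗ₖ ω h) = σ h ⊗ₖ ω' h := by
    intro h
    by_cases h0 : t h = 0
    · have hz : ω' h = 0 := psd_eq_zero_of_trace_eq_zero (hω h) (by rw [← htr h, h0]; simp)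
      rw [h0, hz, Complex.ofReal_zero, zero_smul, Matrix.kronecker_zero]
    · rw [hωdef]
      simp only [h0, if_false]
      rw [Matrix.kronecker_smul, smul_smul, ← Complex.ofReal_mul, mul_inv_cancel₀ h0,
        Complex.ofReal_one, one_smul]
  refine ⟨Fintype.card ι, fun i => t ((Fintype.equivFin ι).symm i),
    fun i => σ ((Fintype.equivFin ι).symm i), fun i => ω ((Fintype.equivFin ι).symm i),
    fun i => htn _, fun i => hσ _, fun i => hωdens _, ?_⟩
  rw [hτ, ← Equiv.sum_comp (Fintype.equivFin ι).symm (fun h => σ h ⊗ₖ ω' h)]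
  exact Finset.sum_congr rfl fun i _ => (hterm _).symm

end Normalize

/-- If some rank-one von Neumann measurement fixing `ρ_B ⊗ ρ_C` leaves
`√(ρ_AB ⊗ ρ_CD)` invariant, then both ρ_AB and ρ_CD are separable. -/
theorem stmt9 {m n u v : ℕ}
    (ρAB : Matrix (Fin m × Fin n) (Fin m × Fin n) ℂ)
    (ρCD : Matrix (Fin u × Fin v) (Fin u × Fin v) ℂ)
    (hAB : IsDensity ρAB) (hCD : IsDensity ρCD)
    (w : (Fin n × Fin u) → (Fin n × Fin u) → ℂ)
    (hw : IsVNM w) (hfix : FixesVNM w (redB ρAB ⊗ₖ redC ρCD))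
    (hinv : pinchBC w (psdSqrt (ρAB ⊗ₖ ρCD)) = psdSqrt (ρAB ⊗ₖ ρCD)) :
    Separable ρAB ∧ Separable ρCD := by
  classical
  obtain ⟨hABpsd, hABtr⟩ := hAB
  obtain ⟨hCDpsd, hCDtr⟩ := hCD
  obtain ⟨hm, hn⟩ := pos_dims hABtr
  obtain ⟨hu, hv⟩ := pos_dims hCDtr
  have hρ : (ρAB ⊗ₖ ρCD).PosSemidef := posSemidef_kronecker hABpsd hCDpsd
  set s := psdSqrt (ρAB ⊗ₖ ρCD) with hsdef
  have hs2 : s * s = ρAB ⊗ₖ ρCD := by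
    rw [hsdef]
    exact psdSqrt_mul_self hρ
  set Q : (Fin n × Fin u) → Matrix ((Fin m × Fin n) × Fin u × Fin v)
      ((Fin m × Fin n) × Fin u × Fin v) ℂ := fun h => ampMid m v (projOf w h) with hQdef
  have hQmul : ∀ g h, Q g * Q h = if g = h then Q g else 0 := by
    intro g h
    rw [hQdef]
    simp only
    rw [ampMid_mul, projOf_mul hw]
    split_ifs with hgh
    · rfl
    · exact ampMid_zero
  have hQsum : ∑ h, Q h = 1 := by
    rw [hQdef]
    simp only
    rw [ampMid_sum, sum_projOf hw, ampMid_one]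
  have hpinch : ∑ h, Q h * s * Q h = s := hinv
  have hcomm : ∀ g, Q g * s = s * Q g := by
    intro g
    have h1 : Q g * s = Q g * s * Q g := by
      conv_lhs => rw [← hpinch, Finset.mul_sum]
      rw [Finset.sum_eq_single g]
      · rw [← mul_assoc, ← mul_assoc, hQmul g g, if_pos rfl]
      · intro h _ hne
        rw [← mul_assoc, ← mul_assoc, hQmul g h, if_neg fun hgh => hne hgh.symm,
          zero_mul, zero_mul]
      · exact fun h => absurd (Finset.mem_univ g) h
    have h2 : s * Q g = Q g * s * Q g := by
      conv_lhs => rw [← hpinch, Finset.sum_mul]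
      rw [Finset.sum_eq_single g]
      · rw [mul_assoc, hQmul g g, if_pos rfl]
      · intro h _ hne
        rw [mul_assoc, hQmul h g, if_neg hne, mul_zero]
      · exact fun h => absurd (Finset.mem_univ g) h
    rw [h1, h2]
  have hcommρ : ∀ g, Q g * (ρAB ⊗ₖ ρCD) = (ρAB ⊗ₖ ρCD) * Q g := by
    intro g
    calc Q g * (ρAB ⊗ₖ ρCD) = Q g * (s * s) := by rw [hs2]
      _ = (Q g * s) * s := (mul_assoc _ _ _).symm
      _ = (s * Q g) * s := by rw [hcomm g]
      _ = s * (Q g * s) := mul_assoc _ _ _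
      _ = s * (s * Q g) := by rw [hcomm g]
      _ = (s * s) * Q g := (mul_assoc _ _ _).symm
      _ = (ρAB ⊗ₖ ρCD) * Q g := by rw [hs2]
  have hpinchρ : ∑ h, Q h * (ρAB ⊗ₖ ρCD) * Q h = ρAB ⊗ₖ ρCD := by
    have heach : ∀ h, Q h * (ρAB ⊗ₖ ρCD) * Q h = (ρAB ⊗ₖ ρCD) * Q h := by
      intro h
      rw [hcommρ h, mul_assoc, hQmul h h, if_pos rfl]
    rw [Finset.sum_congr rfl fun h _ => heach h, ← Finset.mul_sum, hQsum, mul_one]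
  -- sandwich form
  set τ : (Fin n × Fin u) → Matrix (Fin m × Fin v) (Fin m × Fin v) ℂ :=
    fun h => (midVec m v (w h))ᴴ * (ρAB ⊗ₖ ρCD) * midVec m v (w h) with hτdef
  have hτpsd : ∀ h, (τ h).PosSemidef := fun h => hρ.conjTranspose_mul_mul_same _
  have hQρQ : ∀ h, Q h * (ρAB ⊗ₖ ρCD) * Q h
      = midVec m v (w h) * τ h * (midVec m v (w h))ᴴ := by
    intro h
    rw [hQdef]
    simp only
    rw [projOf, ← midVec_mul_conjTranspose, hτdef]
    simp only [Matrix.mul_assoc]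
  have hωdens : ∀ h : Fin n × Fin u, IsDensity (ptrR (outer (w h))) := by
    intro h
    refine ⟨ptrR_posSemidef (outer_posSemidef (w h)), ?_⟩
    rw [trace_ptrR_outer, hw h h, if_pos rfl]
  have hσCdens : ∀ h : Fin n × Fin u, IsDensity (ptrL (outer (w h))) := by
    intro h
    refine ⟨ptrL_posSemidef (outer_posSemidef (w h)), ?_⟩
    rw [trace_ptrL_outer, hw h h, if_pos rfl]
  constructor
  · -- ρAB separable
    have hρAB : ρAB = ∑ h, ptrR (τ h) ⊗ₖ ptrR (outer (w h)) := by
      have h1 : ρAB = ptrR (ρAB ⊗ₖ ρCD) := by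
        ext x y
        simp only [ptrR, of_apply, kroneckerMap_apply]
        rw [← Finset.mul_sum]
        have htr2 : ∑ z : Fin u × Fin v, ρCD z z = ρCD.trace := rfl
        rw [htr2, hCDtr, mul_one]
      rw [h1, ← hpinchρ, ptrR_sum]
      refine Finset.sum_congr rfl fun h _ => ?_
      rw [hQρQ h, ptrR_sandwich]
    exact separable_of_rep_left hm _ _ (fun h => ptrR_posSemidef (hτpsd h)) hωdens hρAB
  · -- ρCD separable
    have hρCD : ρCD = ∑ h, ptrL (outer (w h)) ⊗ₖ ptrL (τ h) := by
      have h1 : ρCD = ptrL (ρAB ⊗ₖ ρCD) := by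
        ext x y
        simp only [ptrL, of_apply, kroneckerMap_apply]
        rw [← Finset.sum_mul]
        have htr2 : ∑ z : Fin m × Fin n, ρAB z z = ρAB.trace := rfl
        rw [htr2, hABtr, one_mul]
      rw [h1, ← hpinchρ, ptrL_sum]
      refine Finset.sum_congr rfl fun h _ => ?_
      rw [hQρQ h, ptrL_sandwich]
    exact separable_of_rep_right hv _ _ hσCdens (fun h => ptrL_posSemidef (hτpsd h)) hρCD
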